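/- The signature of real symmetric matrices is subadditive: if A = B + C are real symmetric n×n matrices, then the number of positive eigenvalues of A is at most the sum of the numbers of positive eigenvalues of B and of C, and similarly for negative eigenvalues. -/

import Mathlib

open Finset Matrix
open scoped RealInnerProductSpace

lemma apply_eb {n : ℕ} {M : Matrix (Fin n) (Fin n) ℝ} (hM : M.IsHermitian) (i : Fin n) :
    Matrix.toEuclideanLin M (hM.eigenvectorBasis i) =
      hM.eigenvalues i • hM.eigenvectorBasis i := by
  have := hM.mulVec_eigenvectorBasis i
  apply (WithLp.equiv 2 (Fin n → ℝ)).injective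
  simp [Matrix.toEuclideanLin_apply]
  ext j
  exact congrFun this j

lemma quad_eq {n : ℕ} {M : Matrix (Fin n) (Fin n) ℝ} (hM : M.IsHermitian)
    (x : EuclideanSpace ℝ (Fin n)) :
    ⟪x, Matrix.toEuclideanLin M x⟫ =
      ∑ i, hM.eigenvalues i * (hM.eigenvectorBasis.repr x i) ^ 2 := by
  have hsym : (Matrix.toEuclideanLin M).IsSymmetric :=
    Matrix.isHermitian_iff_isSymmetric.1 hM
  set b := hM.eigenvectorBasis
  rw [← b.sum_inner_mul_inner x (Matrix.toEuclideanLin M x)]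
  refine Finset.sum_congr rfl fun i _ => ?_
  have h1 : ⟪b i, Matrix.toEuclideanLin M x⟫ = hM.eigenvalues i * ⟪b i, x⟫ := by
    rw [← hsym (b i) x, apply_eb hM i, inner_smul_left]
    simp [b]
  rw [h1, b.repr_apply_apply, real_inner_comm x (b i)]
  ring

lemma repr_zero_of_mem_span {n : ℕ} (b : OrthonormalBasis (Fin n) ℝ (EuclideanSpace ℝ (Fin n)))
    (s : Finset (Fin n)) {x : EuclideanSpace ℝ (Fin n)}
    (hx : x ∈ Submodule.span ℝ (⇑b '' ↑s)) {i : Fin n} (hi : i ∉ s) :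
    b.repr x i = 0 := by
  rw [← b.coe_toBasis] at hx
  rw [Module.Basis.mem_span_image] at hx
  have : i ∉ (b.toBasis.repr x).support := fun h => hi (hx h)
  rw [Finsupp.notMem_support_iff] at this
  rw [← b.coe_toBasis_repr_apply]
  exact this

lemma finrank_span_image {n : ℕ} (b : OrthonormalBasis (Fin n) ℝ (EuclideanSpace ℝ (Fin n)))
    (s : Finset (Fin n)) :
    Module.finrank ℝ (Submodule.span ℝ (⇑b '' ↑s)) = s.card := by
  have hli : LinearIndependent ℝ ((↑) : (⇑b '' ↑s) → EuclideanSpace ℝ (Fin n)) := by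
    apply LinearIndepOn.id_image
    exact b.toBasis.linearIndependent.comp _ Subtype.val_injective
  classical
  have h2 : ⇑b '' ↑s = ↑(s.image ⇑b) := by simp
  rw [h2] at hli ⊢
  rw [finrank_span_finset_eq_card hli]
  exact Finset.card_image_of_injective _ (b.coe_toBasis ▸ b.toBasis.injective)

lemma quad_pos_of_mem {n : ℕ} {M : Matrix (Fin n) (Fin n) ℝ} (hM : M.IsHermitian)
    (s : ℝ) (t : Finset (Fin n)) (ht : ∀ i ∈ t, 0 < s * hM.eigenvalues i)
    {x : EuclideanSpace ℝ (Fin n)}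
    (hx : x ∈ Submodule.span ℝ (⇑hM.eigenvectorBasis '' ↑t)) (hx0 : x ≠ 0) :
    0 < s * ⟪x, Matrix.toEuclideanLin M x⟫ := by
  rw [quad_eq hM x, Finset.mul_sum]
  apply Finset.sum_pos'
  · intro i _
    by_cases hi : i ∈ t
    · have := ht i hi
      rw [← mul_assoc]
      positivity
    · rw [repr_zero_of_mem_span _ t hx hi]; simp
  · have : ∃ i, hM.eigenvectorBasis.repr x i ≠ 0 := by
      by_contra h
      push_neg at h
      apply hx0
      have : hM.eigenvectorBasis.repr x = 0 := by
        ext i; exact h i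
      simpa using hM.eigenvectorBasis.repr.map_eq_zero_iff.1 this
    obtain ⟨i, hi⟩ := this
    have hit : i ∈ t := by
      by_contra hit
      exact hi (repr_zero_of_mem_span _ t hx hit)
    exact ⟨i, Finset.mem_univ i, by
      rw [← mul_assoc]
      have := ht i hit
      positivity⟩

lemma quad_nonpos_of_mem {n : ℕ} {M : Matrix (Fin n) (Fin n) ℝ} (hM : M.IsHermitian)
    (s : ℝ) (t : Finset (Fin n)) (ht : ∀ i ∈ t, s * hM.eigenvalues i ≤ 0)
    {x : EuclideanSpace ℝ (Fin n)}
    (hx : x ∈ Submodule.span ℝ (⇑hM.eigenvectorBasis '' ↑t)) :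
    s * ⟪x, Matrix.toEuclideanLin M x⟫ ≤ 0 := by
  rw [quad_eq hM x, Finset.mul_sum]
  apply Finset.sum_nonpos
  intro i _
  by_cases hi : i ∈ t
  · have := ht i hi
    rw [← mul_assoc]
    exact mul_nonpos_of_nonpos_of_nonneg this (sq_nonneg _)
  · rw [repr_zero_of_mem_span _ t hx hi]; simp

lemma key {n : ℕ} (A B C : Matrix (Fin n) (Fin n) ℝ)
    (hA : A.IsHermitian) (hB : B.IsHermitian) (hC : C.IsHermitian)
    (hsum : A = B + C) (s : ℝ) :
    (univ.filter fun i => 0 < s * hA.eigenvalues i).card ≤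
      (univ.filter fun i => 0 < s * hB.eigenvalues i).card +
      (univ.filter fun i => 0 < s * hC.eigenvalues i).card := by
  classical
  by_contra hcon
  push_neg at hcon
  set tA := univ.filter fun i => 0 < s * hA.eigenvalues i with htA
  set tB := univ.filter fun i => ¬ 0 < s * hB.eigenvalues i with htB
  set tC := univ.filter fun i => ¬ 0 < s * hC.eigenvalues i with htC
  set V := Submodule.span ℝ (⇑hA.eigenvectorBasis '' ↑tA) with hV
  set WB := Submodule.span ℝ (⇑hB.eigenvectorBasis '' ↑tB) with hWB
  set WC := Submodule.span ℝ (⇑hC.eigenvectorBasis '' ↑tC) with hWC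
  have hfr : Module.finrank ℝ (EuclideanSpace ℝ (Fin n)) = n := by
    simp [finrank_euclideanSpace]
  have hdV : Module.finrank ℝ V = tA.card := finrank_span_image _ _
  have hdB : Module.finrank ℝ WB = tB.card := finrank_span_image _ _
  have hdC : Module.finrank ℝ WC = tC.card := finrank_span_image _ _
  have hcardB : (univ.filter fun i => 0 < s * hB.eigenvalues i).card + tB.card = n := by
    rw [htB, Finset.card_filter_add_card_filter_not]
    simp
  have hcardC : (univ.filter fun i => 0 < s * hC.eigenvalues i).card + tC.card = n := by
    rw [htC, Finset.card_filter_add_card_filter_not]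
    simp
  have hineq1 : Module.finrank ℝ V + Module.finrank ℝ WB ≤
      Module.finrank ℝ (V ⊓ WB : Submodule ℝ (EuclideanSpace ℝ (Fin n))) + n := by
    rw [← Submodule.finrank_sup_add_finrank_inf_eq V WB]
    have := Submodule.finrank_le (V ⊔ WB)
    rw [hfr] at this
    omega
  have hineq2 : Module.finrank ℝ (V ⊓ WB : Submodule ℝ (EuclideanSpace ℝ (Fin n)))
      + Module.finrank ℝ WC ≤
      Module.finrank ℝ ((V ⊓ WB) ⊓ WC : Submodule ℝ (EuclideanSpace ℝ (Fin n))) + n := by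
    rw [← Submodule.finrank_sup_add_finrank_inf_eq (V ⊓ WB) WC]
    have := Submodule.finrank_le ((V ⊓ WB) ⊔ WC)
    rw [hfr] at this
    omega
  have hpos : 0 < Module.finrank ℝ ((V ⊓ WB) ⊓ WC : Submodule ℝ (EuclideanSpace ℝ (Fin n))) := by
    omega
  have hne : ((V ⊓ WB) ⊓ WC : Submodule ℝ (EuclideanSpace ℝ (Fin n))) ≠ ⊥ := by
    intro h
    rw [h, finrank_bot] at hpos
    omega
  obtain ⟨x, hx, hx0⟩ := Submodule.exists_mem_ne_zero_of_ne_bot hne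
  obtain ⟨⟨hxV, hxB⟩, hxC⟩ := hx
  have h1 : 0 < s * ⟪x, Matrix.toEuclideanLin A x⟫ := by
    apply quad_pos_of_mem hA s tA _ hxV hx0
    intro i hi
    rw [htA] at hi
    exact (Finset.mem_filter.1 hi).2
  have h2 : s * ⟪x, Matrix.toEuclideanLin B x⟫ ≤ 0 := by
    apply quad_nonpos_of_mem hB s tB _ hxB
    intro i hi
    rw [htB] at hi
    have := (Finset.mem_filter.1 hi).2
    linarith [not_lt.1 this]
  have h3 : s * ⟪x, Matrix.toEuclideanLin C x⟫ ≤ 0 := by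
    apply quad_nonpos_of_mem hC s tC _ hxC
    intro i hi
    rw [htC] at hi
    have := (Finset.mem_filter.1 hi).2
    linarith [not_lt.1 this]
  have hAx : Matrix.toEuclideanLin A x = Matrix.toEuclideanLin B x + Matrix.toEuclideanLin C x := by
    rw [hsum, map_add]
    rfl
  rw [hAx, inner_add_right] at h1
  nlinarith

/-- Subadditivity of the signature: if `A = B + C` are real symmetric matrices,
then the number of positive eigenvalues of `A` is at most the sum of the numbers
of positive eigenvalues of `B` and of `C`, and similarly for negative eigenvalues. -/
theorem stmt_2 (n : ℕ) (A B C : Matrix (Fin n) (Fin n) ℝ)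
    (hA : A.IsHermitian) (hB : B.IsHermitian) (hC : C.IsHermitian)
    (hsum : A = B + C) :
    (univ.filter fun i => 0 < hA.eigenvalues i).card ≤
      (univ.filter fun i => 0 < hB.eigenvalues i).card +
      (univ.filter fun i => 0 < hC.eigenvalues i).card ∧
    (univ.filter fun i => hA.eigenvalues i < 0).card ≤
      (univ.filter fun i => hB.eigenvalues i < 0).card +
      (univ.filter fun i => hC.eigenvalues i < 0).card := by
  constructor
  · have h := key A B C hA hB hC hsum 1
    simpa [one_mul] using h
  · have h := key A B C hA hB hC hsum (-1)
    simpa [neg_mul, one_mul, neg_pos] using h
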